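/- Let X ⊆ ℝ^k be a nonempty compact set. For each n ∈ ℕ let (S_{n,j})_{j≥1}, and also (S_j)_{j≥1}, be countably infinite families of contractive similarity maps with S_{n,j}(X) ⊆ X and S_j(X) ⊆ X, all similarity ratios lying in (0, s] for some s < 1. Let (p_{n,j})_{j≥1} and (p_j)_{j≥1} be probability vectors with all entries positive, and let μ_n and μ be Borel probability measures with μ_n(X) = μ(X) = 1 satisfying μ_n = Σ_{j≥1} p_{n,j} μ_n∘S_{n,j}^{-1} and μ = Σ_{j≥1} p_j μ∘S_j^{-1}. Assume Σ_{j≥1} sup_{x∈X} ‖S_{n,j}(x) − S_j(x)‖ → 0 and Σ_{j≥1} |p_{n,j} − p_j| → 0 as n → ∞. Then sup { |∫ f dμ_n − ∫ f dμ| : f : ℝ^k → ℝ is 1-Lipschitz } → 0 as n → ∞; in particular μ_n → μ weakly. -/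

import Mathlib

open MeasureTheory Filter

section Aux

variable {α : Type*} [MeasurableSpace α] [TopologicalSpace α] [OpensMeasurableSpace α]

lemma aux_ae_mem (μ : Measure α) [IsProbabilityMeasure μ] {X : Set α}
    (hXm : MeasurableSet X) (hμX : μ X = 1) : ∀ᵐ x ∂μ, x ∈ X := by
  rw [MeasureTheory.ae_iff]
  have : μ Xᶜ = μ Set.univ - μ X := measure_compl hXm (measure_ne_top μ X)
  simp only [measure_univ, hμX, tsub_self] at this
  exact this

lemma aux_integrable (μ : Measure α) [IsProbabilityMeasure μ] {X : Set α}
    (hXm : MeasurableSet X) (hμX : μ X = 1)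
    {f : α → ℝ} (hf : Continuous f) {C : ℝ} (hC : ∀ x ∈ X, |f x| ≤ C) :
    Integrable f μ := by
  have hb : ∀ᵐ x ∂μ, ‖f x‖ ≤ C := (aux_ae_mem μ hXm hμX).mono fun x hx => hC x hx
  exact ⟨hf.aestronglyMeasurable, HasFiniteIntegral.of_bounded hb⟩

lemma aux_int_bound (μ : Measure α) [IsProbabilityMeasure μ] {X : Set α}
    (hXm : MeasurableSet X) (hμX : μ X = 1)
    {f : α → ℝ} (hC2 : ∀ᵐ x ∂μ, x ∈ X) {C : ℝ} (hC : ∀ x ∈ X, |f x| ≤ C) :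
    |∫ x, f x ∂μ| ≤ C := by
  have hb : ∀ᵐ x ∂μ, ‖f x‖ ≤ C := hC2.mono fun x hx => hC x hx
  have := norm_integral_le_of_norm_le_const hb
  simpa using this

end Aux

lemma aux_self_integral {α : Type*} [MeasurableSpace α] [TopologicalSpace α] [BorelSpace α]
    (μ : Measure α) (R : ℕ → α → α) (hR : ∀ j, Continuous (R j))
    (w : ℕ → ℝ) (hw : ∀ j, 0 ≤ w j)
    (hself : μ = Measure.sum (fun j => ENNReal.ofReal (w j) • μ.map (R j)))
    {f : α → ℝ} (hf : Continuous f) (hint : Integrable f μ) :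
    ∫ x, f x ∂μ = ∑' j, w j * ∫ x, f (R j x) ∂μ := by
  have h1 : Integrable f (Measure.sum fun j => ENNReal.ofReal (w j) • μ.map (R j)) :=
    hself ▸ hint
  calc ∫ x, f x ∂μ = ∫ x, f x ∂(Measure.sum fun j => ENNReal.ofReal (w j) • μ.map (R j)) := by
        rw [← hself]
    _ = ∑' j, ∫ x, f x ∂(ENNReal.ofReal (w j) • μ.map (R j)) := integral_sum_measure h1
    _ = ∑' j, w j * ∫ x, f (R j x) ∂μ := by
        refine tsum_congr fun j => ?_
        rw [integral_smul_measure, integral_map (hR j).aemeasurable hf.aestronglyMeasurable,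
          ENNReal.toReal_ofReal (hw j), smul_eq_mul]

/-- Stability of infinite self-similar measures: if the maps and the probability vectors
converge (summably), the associated self-similar measures converge in the Kantorovich
(dual Lipschitz) metric, and in particular weakly. -/
theorem self_similar_measures_stability
    {k : ℕ} (X : Set (EuclideanSpace ℝ (Fin k)))
    (hXne : X.Nonempty) (hXcomp : IsCompact X)
    (S : ℕ → ℕ → EuclideanSpace ℝ (Fin k) → EuclideanSpace ℝ (Fin k))
    (T : ℕ → EuclideanSpace ℝ (Fin k) → EuclideanSpace ℝ (Fin k))
    (s : ℕ → ℕ → ℝ) (t : ℕ → ℝ) (c : ℝ) (hc : c < 1)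
    (hSsim : ∀ n j x y, dist (S n j x) (S n j y) = s n j * dist x y)
    (hTsim : ∀ j x y, dist (T j x) (T j y) = t j * dist x y)
    (hsrange : ∀ n j, 0 < s n j ∧ s n j ≤ c)
    (htrange : ∀ j, 0 < t j ∧ t j ≤ c)
    (hSmaps : ∀ n j, S n j '' X ⊆ X) (hTmaps : ∀ j, T j '' X ⊆ X)
    (p : ℕ → ℕ → ℝ) (q : ℕ → ℝ)
    (hp : ∀ n j, 0 < p n j) (hq : ∀ j, 0 < q j)
    (hpsum : ∀ n, ∑' j, p n j = 1) (hqsum : ∑' j, q j = 1)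
    (μ : ℕ → Measure (EuclideanSpace ℝ (Fin k)))
    (ν : Measure (EuclideanSpace ℝ (Fin k)))
    [∀ n, IsProbabilityMeasure (μ n)] [IsProbabilityMeasure ν]
    (hμX : ∀ n, μ n X = 1) (hνX : ν X = 1)
    (hμself : ∀ n, μ n = Measure.sum (fun j : ℕ => ENNReal.ofReal (p n j) • (μ n).map (S n j)))
    (hνself : ν = Measure.sum (fun j : ℕ => ENNReal.ofReal (q j) • ν.map (T j)))
    (hSsummable : ∀ n, Summable (fun j => ⨆ x : X, ‖S n j x - T j x‖))
    (hSconv : Tendsto (fun n => ∑' j, ⨆ x : X, ‖S n j x - T j x‖) atTop (nhds 0))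
    (hpconv : Tendsto (fun n => ∑' j, |p n j - q j|) atTop (nhds 0)) :
    Tendsto (fun n => sSup {d : ℝ | ∃ f : EuclideanSpace ℝ (Fin k) → ℝ,
        LipschitzWith 1 f ∧ d = |∫ x, f x ∂(μ n) - ∫ x, f x ∂ν|}) atTop (nhds 0) ∧
    ∀ f : EuclideanSpace ℝ (Fin k) → ℝ, Continuous f → (∃ C, ∀ x, |f x| ≤ C) →
      Tendsto (fun n => ∫ x, f x ∂(μ n)) atTop (nhds (∫ x, f x ∂ν)) := by
  obtain ⟨x0, hx0⟩ := hXne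
  set M : ℝ := Metric.diam X with hMdef
  have hM0 : 0 ≤ M := Metric.diam_nonneg
  have hXm : MeasurableSet X := hXcomp.isClosed.measurableSet
  have hdistX : ∀ x ∈ X, ∀ y ∈ X, dist x y ≤ M := fun x hx y hy =>
    Metric.dist_le_diam_of_mem hXcomp.isBounded hx hy
  have hc0 : 0 < c := (hsrange 0 0).1.trans_le (hsrange 0 0).2
  -- continuity of maps
  have Scont : ∀ n j, Continuous (S n j) := by
    intro n j
    refine (LipschitzWith.of_dist_le_mul (K := (s n j).toNNReal) fun x y => ?_).continuous
    rw [hSsim, Real.coe_toNNReal _ (hsrange n j).1.le]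
  have Tcont : ∀ j, Continuous (T j) := by
    intro j
    refine (LipschitzWith.of_dist_le_mul (K := (t j).toNNReal) fun x y => ?_).continuous
    rw [hTsim, Real.coe_toNNReal _ (htrange j).1.le]
  have aeμ : ∀ n, ∀ᵐ x ∂(μ n), x ∈ X := fun n => aux_ae_mem (μ n) hXm (hμX n)
  have aeν : ∀ᵐ x ∂ν, x ∈ X := aux_ae_mem ν hXm hνX
  -- summability of probability vectors
  have hpsummable : ∀ n, Summable (p n) := by
    intro n
    by_contra h
    have h1 := hpsum n
    rw [tsum_eq_zero_of_not_summable h] at h1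
    exact one_ne_zero h1.symm
  have hqsummable : Summable q := by
    by_contra h
    rw [tsum_eq_zero_of_not_summable h] at hqsum
    exact one_ne_zero hqsum.symm
  have hple : ∀ n j, p n j ≤ 1 := by
    intro n j
    rw [← hpsum n]
    exact Summable.le_tsum (hpsummable n) j fun i _ => (hp n i).le
  -- sup of the map differences
  set e : ℕ → ℕ → ℝ := fun n j => ⨆ x : X, ‖S n j x - T j x‖ with hedef
  have he0 : ∀ n j, 0 ≤ e n j := fun n j => Real.iSup_nonneg fun x => norm_nonneg _
  have hebdd : ∀ n j, BddAbove (Set.range fun x : X => ‖S n j x - T j x‖) := by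
    intro n j
    haveI : CompactSpace X := isCompact_iff_compactSpace.mp hXcomp
    refine (isCompact_range ?_).bddAbove
    exact (((Scont n j).comp continuous_subtype_val).sub
      ((Tcont j).comp continuous_subtype_val)).norm
  have hele : ∀ n j, ∀ x ∈ X, ‖S n j x - T j x‖ ≤ e n j := by
    intro n j x hx
    exact le_ciSup (hebdd n j) (⟨x, hx⟩ : X)
  -- the Kantorovich distances
  set Dset : ℕ → Set ℝ := fun n => {d : ℝ | ∃ f : EuclideanSpace ℝ (Fin k) → ℝ,
      LipschitzWith 1 f ∧ d = |∫ x, f x ∂(μ n) - ∫ x, f x ∂ν|} with hDsetdef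
  have h0mem : ∀ n, (0:ℝ) ∈ Dset n := by
    intro n
    refine ⟨fun _ => 0, ?_, by simp⟩
    exact LipschitzWith.const' (0:ℝ)
  -- generic bound for 1-Lipschitz functions on X
  have hlipbound : ∀ f : EuclideanSpace ℝ (Fin k) → ℝ, LipschitzWith 1 f →
      ∀ x ∈ X, |f x| ≤ |f x0| + M := by
    intro f hf x hx
    have h1 : |f x - f x0| ≤ dist x x0 := by
      have := hf.dist_le_mul x x0
      simpa [Real.dist_eq] using this
    have h2 := hdistX x hx x0 hx0
    have : |f x| - |f x0| ≤ |f x - f x0| := by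
      have := abs_sub_abs_le_abs_sub (f x) (f x0)
      linarith
    linarith
  have hbddD : ∀ n, ∀ d ∈ Dset n, d ≤ 2 * M := by
    intro n d hd
    obtain ⟨f, hf, rfl⟩ := hd
    set g : EuclideanSpace ℝ (Fin k) → ℝ := fun x => f x - f x0 with hgdef
    have hgcont : Continuous g := (hf.continuous).sub continuous_const
    have hgbound : ∀ x ∈ X, |g x| ≤ M := by
      intro x hx
      have := hf.dist_le_mul x x0
      simpa [hgdef, Real.dist_eq] using this.trans (by simpa using hdistX x hx x0 hx0)
    have hintμ : Integrable g (μ n) := aux_integrable (μ n) hXm (hμX n) hgcont hgbound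
    have hintν : Integrable g ν := aux_integrable ν hXm hνX hgcont hgbound
    have heq : ∫ x, f x ∂(μ n) - ∫ x, f x ∂ν = ∫ x, g x ∂(μ n) - ∫ x, g x ∂ν := by
      have h1 : ∫ x, g x ∂(μ n) = ∫ x, f x ∂(μ n) - f x0 := by
        rw [hgdef]
        rw [integral_sub ?_ (integrable_const _)]
        · simp
        · have : Integrable (fun x => g x + f x0) (μ n) := hintμ.add (integrable_const _)
          simpa [hgdef] using this
      have h2 : ∫ x, g x ∂ν = ∫ x, f x ∂ν - f x0 := by
        rw [hgdef]
        rw [integral_sub ?_ (integrable_const _)]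
        · simp
        · have : Integrable (fun x => g x + f x0) ν := hintν.add (integrable_const _)
          simpa [hgdef] using this
      rw [h1, h2]; ring
    rw [heq]
    have b1 := aux_int_bound (μ n) hXm (hμX n) (aeμ n) hgbound
    have b2 := aux_int_bound ν hXm hνX aeν hgbound
    calc |∫ x, g x ∂(μ n) - ∫ x, g x ∂ν| ≤ |∫ x, g x ∂(μ n)| + |∫ x, g x ∂ν| := abs_sub _ _
      _ ≤ M + M := add_le_add b1 b2
      _ = 2 * M := by ring
  have hDbddAbove : ∀ n, BddAbove (Dset n) := fun n => ⟨2 * M, fun d hd => hbddD n d hd⟩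
  set D : ℕ → ℝ := fun n => sSup (Dset n) with hDdef
  have hD0 : ∀ n, 0 ≤ D n := fun n => le_csSup (hDbddAbove n) (h0mem n)
  have habs_summable : ∀ n, Summable (fun j => |p n j - q j|) := by
    intro n
    refine Summable.of_nonneg_of_le (fun j => abs_nonneg _) (fun j => ?_)
      ((hpsummable n).add hqsummable)
    calc |p n j - q j| ≤ |p n j| + |q j| := abs_sub _ _
      _ = p n j + q j := by rw [abs_of_pos (hp n j), abs_of_pos (hq j)]
  have habstsum : ∀ (u : ℕ → ℝ), Summable (fun j => |u j|) → |∑' j, u j| ≤ ∑' j, |u j| := by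
    intro u hu
    simpa [Real.norm_eq_abs] using
      norm_tsum_le_tsum_norm (f := u) (by simpa [Real.norm_eq_abs] using hu)
  have hkey : ∀ n, D n ≤ c * D n + (∑' j, e n j) + M * (∑' j, |p n j - q j|) := by
    intro n
    refine csSup_le ⟨0, h0mem n⟩ ?_
    rintro d ⟨f, hf, rfl⟩
    set Cf := |f x0| + M with hCfdef
    have hfb : ∀ x ∈ X, |f x| ≤ Cf := hlipbound f hf
    have hfc : Continuous f := hf.continuous
    have hintμ : Integrable f (μ n) := aux_integrable (μ n) hXm (hμX n) hfc hfb
    have hintν : Integrable f ν := aux_integrable ν hXm hνX hfc hfb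
    have hfSb : ∀ j, ∀ x ∈ X, |f (S n j x)| ≤ Cf := fun j x hx =>
      hfb _ (hSmaps n j ⟨x, hx, rfl⟩)
    have hfTb : ∀ j, ∀ x ∈ X, |f (T j x)| ≤ Cf := fun j x hx =>
      hfb _ (hTmaps j ⟨x, hx, rfl⟩)
    have hintSν : ∀ j, Integrable (fun x => f (S n j x)) ν := fun j =>
      aux_integrable ν hXm hνX (hfc.comp (Scont n j)) (hfSb j)
    have hintTν : ∀ j, Integrable (fun x => f (T j x)) ν := fun j =>
      aux_integrable ν hXm hνX (hfc.comp (Tcont j)) (hfTb j)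
    set A : ℕ → ℝ := fun j => ∫ x, f (S n j x) ∂(μ n) with hAdef
    set A' : ℕ → ℝ := fun j => ∫ x, f (S n j x) ∂ν with hA'def
    set B : ℕ → ℝ := fun j => ∫ x, f (T j x) ∂ν with hBdef
    have Hμ : ∫ x, f x ∂(μ n) = ∑' j, p n j * A j :=
      aux_self_integral (μ n) (S n) (Scont n) (p n) (fun j => (hp n j).le) (hμself n) hfc hintμ
    have Hν : ∫ x, f x ∂ν = ∑' j, q j * B j :=
      aux_self_integral ν T Tcont q (fun j => (hq j).le) hνself hfc hintν
    have hAb : ∀ j, |A j| ≤ Cf := fun j => aux_int_bound (μ n) hXm (hμX n) (aeμ n) (hfSb j)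
    have hBb : ∀ j, |B j| ≤ Cf := fun j => aux_int_bound ν hXm hνX aeν (hfTb j)
    have hAA' : ∀ j, |A j - A' j| ≤ c * D n := by
      intro j
      set g : EuclideanSpace ℝ (Fin k) → ℝ := fun x => (s n j)⁻¹ * f (S n j x) with hgdef
      have hs := (hsrange n j).1
      have hg : LipschitzWith 1 g := by
        refine LipschitzWith.of_dist_le_mul fun x y => ?_
        have h1 : dist (f (S n j x)) (f (S n j y)) ≤ dist (S n j x) (S n j y) := by
          simpa using hf.dist_le_mul (S n j x) (S n j y)
        rw [hSsim] at h1
        have h2 : dist (g x) (g y) = (s n j)⁻¹ * dist (f (S n j x)) (f (S n j y)) := by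
          simp only [hgdef, Real.dist_eq]
          rw [← mul_sub, abs_mul, abs_of_pos (inv_pos.mpr hs)]
        rw [h2, NNReal.coe_one, one_mul]
        calc (s n j)⁻¹ * dist (f (S n j x)) (f (S n j y))
            ≤ (s n j)⁻¹ * (s n j * dist x y) :=
              mul_le_mul_of_nonneg_left h1 (inv_pos.mpr hs).le
          _ = dist x y := by field_simp
      have hle : |∫ x, g x ∂(μ n) - ∫ x, g x ∂ν| ≤ D n :=
        le_csSup (hDbddAbove n) ⟨g, hg, rfl⟩
      have e1 : ∫ x, g x ∂(μ n) = (s n j)⁻¹ * A j := integral_const_mul _ _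
      have e2 : ∫ x, g x ∂ν = (s n j)⁻¹ * A' j := integral_const_mul _ _
      have h3 : A j - A' j = s n j * (∫ x, g x ∂(μ n) - ∫ x, g x ∂ν) := by
        rw [e1, e2]; field_simp
      rw [h3, abs_mul, abs_of_pos hs]
      calc s n j * |∫ x, g x ∂(μ n) - ∫ x, g x ∂ν| ≤ s n j * D n :=
            mul_le_mul_of_nonneg_left hle hs.le
        _ ≤ c * D n := mul_le_mul_of_nonneg_right (hsrange n j).2 (hD0 n)
    have hA'B : ∀ j, |A' j - B j| ≤ e n j := by
      intro j
      have heq : A' j - B j = ∫ x, (f (S n j x) - f (T j x)) ∂ν :=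
        (integral_sub (hintSν j) (hintTν j)).symm
      rw [heq]
      refine aux_int_bound ν hXm hνX aeν (f := fun x => f (S n j x) - f (T j x)) ?_
      intro x hx
      have h1 : |f (S n j x) - f (T j x)| ≤ dist (S n j x) (T j x) := by
        simpa [Real.dist_eq] using hf.dist_le_mul (S n j x) (T j x)
      have h2 : dist (S n j x) (T j x) = ‖S n j x - T j x‖ := dist_eq_norm _ _
      exact h1.trans (h2 ▸ hele n j x hx)
    have hB0 : ∀ j, |B j - f x0| ≤ M := by
      intro j
      have heq : B j - f x0 = ∫ x, (f (T j x) - f x0) ∂ν := by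
        rw [integral_sub (hintTν j) (integrable_const _)]; simp [hBdef]
      rw [heq]
      refine aux_int_bound ν hXm hνX aeν (f := fun x => f (T j x) - f x0) ?_
      intro x hx
      have hTx : T j x ∈ X := hTmaps j ⟨x, hx, rfl⟩
      have h2 := hf.dist_le_mul (T j x) x0
      simp only [NNReal.coe_one, one_mul, Real.dist_eq] at h2
      exact h2.trans (hdistX _ hTx _ hx0)
    -- summabilities of absolute values
    have sa1 : Summable (fun j => |p n j * (A j - A' j)|) := by
      refine Summable.of_nonneg_of_le (fun j => abs_nonneg _) (fun j => ?_)
        ((hpsummable n).mul_right (c * D n))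
      rw [abs_mul, abs_of_pos (hp n j)]
      exact mul_le_mul_of_nonneg_left (hAA' j) (hp n j).le
    have sa2 : Summable (fun j => |p n j * (A' j - B j)|) := by
      refine Summable.of_nonneg_of_le (fun j => abs_nonneg _) (fun j => ?_) (hSsummable n)
      rw [abs_mul, abs_of_pos (hp n j)]
      calc p n j * |A' j - B j| ≤ 1 * |A' j - B j| :=
            mul_le_mul_of_nonneg_right (hple n j) (abs_nonneg _)
        _ = |A' j - B j| := one_mul _
        _ ≤ e n j := hA'B j
    have sa3 : Summable (fun j => |(p n j - q j) * (B j - f x0)|) := by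
      refine Summable.of_nonneg_of_le (fun j => abs_nonneg _) (fun j => ?_)
        ((habs_summable n).mul_right M)
      rw [abs_mul]
      exact mul_le_mul_of_nonneg_left (hB0 j) (abs_nonneg _)
    have sum1 : Summable (fun j => p n j * (A j - A' j)) := Summable.of_abs sa1
    have sum2 : Summable (fun j => p n j * (A' j - B j)) := Summable.of_abs sa2
    have sum3 : Summable (fun j => (p n j - q j) * (B j - f x0)) := Summable.of_abs sa3
    have sum4 : Summable (fun j => (p n j - q j) * f x0) :=
      ((hpsummable n).sub hqsummable).mul_right _
    have sumpA : Summable (fun j => p n j * A j) := by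
      refine Summable.of_abs (Summable.of_nonneg_of_le (fun j => abs_nonneg _) (fun j => ?_)
        ((hpsummable n).mul_right Cf))
      rw [abs_mul, abs_of_pos (hp n j)]
      exact mul_le_mul_of_nonneg_left (hAb j) (hp n j).le
    have sumqB : Summable (fun j => q j * B j) := by
      refine Summable.of_abs (Summable.of_nonneg_of_le (fun j => abs_nonneg _) (fun j => ?_)
        (hqsummable.mul_right Cf))
      rw [abs_mul, abs_of_pos (hq j)]
      exact mul_le_mul_of_nonneg_left (hBb j) (hq j).le
    have hzero : ∑' j, (p n j - q j) * f x0 = 0 := by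
      rw [tsum_mul_right, Summable.tsum_sub (hpsummable n) hqsummable, hpsum n, hqsum, sub_self, zero_mul]
    have Htot : ∫ x, f x ∂(μ n) - ∫ x, f x ∂ν =
        (∑' j, p n j * (A j - A' j)) + (∑' j, p n j * (A' j - B j))
          + (∑' j, (p n j - q j) * (B j - f x0)) := by
      rw [Hμ, Hν, ← Summable.tsum_sub sumpA sumqB]
      calc ∑' j, (p n j * A j - q j * B j)
          = ∑' j, (p n j * (A j - A' j) + p n j * (A' j - B j) + (p n j - q j) * (B j - f x0)
            + (p n j - q j) * f x0) := tsum_congr fun j => by ring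
        _ = (∑' j, (p n j * (A j - A' j) + p n j * (A' j - B j) + (p n j - q j) * (B j - f x0)))
            + ∑' j, (p n j - q j) * f x0 := Summable.tsum_add ((sum1.add sum2).add sum3) sum4
        _ = _ := by rw [hzero, add_zero, Summable.tsum_add (sum1.add sum2) sum3, Summable.tsum_add sum1 sum2]
    have b1 : |∑' j, p n j * (A j - A' j)| ≤ c * D n := by
      refine (habstsum _ sa1).trans ?_
      calc ∑' j, |p n j * (A j - A' j)| ≤ ∑' j, p n j * (c * D n) := by
            refine Summable.tsum_le_tsum (fun j => ?_) sa1 ((hpsummable n).mul_right _)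
            rw [abs_mul, abs_of_pos (hp n j)]
            exact mul_le_mul_of_nonneg_left (hAA' j) (hp n j).le
        _ = (∑' j, p n j) * (c * D n) := tsum_mul_right
        _ = c * D n := by rw [hpsum n, one_mul]
    have b2 : |∑' j, p n j * (A' j - B j)| ≤ ∑' j, e n j := by
      refine (habstsum _ sa2).trans ?_
      refine Summable.tsum_le_tsum (fun j => ?_) sa2 (hSsummable n)
      rw [abs_mul, abs_of_pos (hp n j)]
      calc p n j * |A' j - B j| ≤ 1 * |A' j - B j| :=
            mul_le_mul_of_nonneg_right (hple n j) (abs_nonneg _)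
        _ = |A' j - B j| := one_mul _
        _ ≤ e n j := hA'B j
    have b3 : |∑' j, (p n j - q j) * (B j - f x0)| ≤ M * (∑' j, |p n j - q j|) := by
      refine (habstsum _ sa3).trans ?_
      calc ∑' j, |(p n j - q j) * (B j - f x0)| ≤ ∑' j, |p n j - q j| * M := by
            refine Summable.tsum_le_tsum (fun j => ?_) sa3 ((habs_summable n).mul_right M)
            rw [abs_mul]
            exact mul_le_mul_of_nonneg_left (hB0 j) (abs_nonneg _)
        _ = (∑' j, |p n j - q j|) * M := tsum_mul_right
        _ = M * (∑' j, |p n j - q j|) := mul_comm _ _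
    rw [Htot]
    calc |(∑' j, p n j * (A j - A' j)) + (∑' j, p n j * (A' j - B j))
          + (∑' j, (p n j - q j) * (B j - f x0))|
        ≤ |(∑' j, p n j * (A j - A' j)) + (∑' j, p n j * (A' j - B j))|
          + |∑' j, (p n j - q j) * (B j - f x0)| := abs_add_le _ _
      _ ≤ |∑' j, p n j * (A j - A' j)| + |∑' j, p n j * (A' j - B j)|
          + |∑' j, (p n j - q j) * (B j - f x0)| := by
            exact add_le_add_left (abs_add_le _ _) _
      _ ≤ c * D n + (∑' j, e n j) + M * (∑' j, |p n j - q j|) :=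
            add_le_add (add_le_add b1 b2) b3
  have h1c : 0 < 1 - c := by linarith
  have hDle : ∀ n, D n ≤ ((∑' j, e n j) + M * (∑' j, |p n j - q j|)) / (1 - c) := by
    intro n
    rw [le_div_iff₀ h1c]
    have := hkey n
    nlinarith [hD0 n]
  have hlim : Tendsto (fun n => ((∑' j, e n j) + M * (∑' j, |p n j - q j|)) / (1 - c))
      atTop (nhds 0) := by
    have h2 : Tendsto (fun n => (∑' j, e n j) + M * (∑' j, |p n j - q j|)) atTop (nhds 0) := by
      have := hSconv.add (hpconv.const_mul M)
      simpa using this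
    have := h2.div_const (1 - c)
    simpa using this
  have part1 : Tendsto D atTop (nhds 0) := squeeze_zero hD0 hDle hlim
  refine ⟨part1, ?_⟩
  intro f hfc hCex
  obtain ⟨C0, hC0⟩ := hCex
  have hC0nn : 0 ≤ C0 := (abs_nonneg _).trans (hC0 x0)
  rw [Metric.tendsto_atTop]
  intro ε hε
  -- Lipschitz approximation of f on X
  set K := Metric.cthickening (2*C0+1) X with hKdef
  have hKcomp : IsCompact K := hXcomp.cthickening
  have hKuc := hKcomp.uniformContinuousOn_of_continuous hfc.continuousOn
  rw [Metric.uniformContinuousOn_iff] at hKuc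
  obtain ⟨δ0', hδ0', hδ0⟩ := hKuc (ε/4) (by linarith)
  set δ1 := min δ0' 1 with hδ1def
  have hδ1pos : 0 < δ1 := lt_min hδ0' one_pos
  have hδ1le : δ1 ≤ 1 := min_le_right _ _
  set L : ℝ := (2*C0+1)/δ1 with hLdef
  have hLpos : 0 < L := div_pos (by linarith) hδ1pos
  set g : EuclideanSpace ℝ (Fin k) → ℝ := fun x => ⨅ y, (f y + L * dist x y) with hgdef
  have hbdd : ∀ x, BddBelow (Set.range fun y => f y + L * dist x y) := by
    intro x
    refine ⟨-C0, ?_⟩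
    rintro r ⟨y, rfl⟩
    have h1 := (abs_le.mp (hC0 y)).1
    have h2 : 0 ≤ L * dist x y := mul_nonneg hLpos.le dist_nonneg
    dsimp only
    linarith
  have hgle : ∀ x, g x ≤ f x := by
    intro x
    have := ciInf_le (hbdd x) x
    simpa using this
  have hkey2 : ∀ a b : EuclideanSpace ℝ (Fin k), g a ≤ g b + L * dist a b := by
    intro a b
    have h1 : ∀ y, g a ≤ f y + L * dist b y + L * dist a b := by
      intro y
      refine (ciInf_le (hbdd a) y).trans ?_
      have h2 := dist_triangle a b y
      nlinarith [hLpos.le]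
    have h2 : g a - L * dist a b ≤ ⨅ y, (f y + L * dist b y) :=
      le_ciInf fun y => by linarith [h1 y]
    have : (⨅ y, (f y + L * dist b y)) = g b := rfl
    linarith
  have hglip : LipschitzWith L.toNNReal g := by
    refine LipschitzWith.of_dist_le_mul fun x x' => ?_
    rw [Real.coe_toNNReal _ hLpos.le, Real.dist_eq, abs_sub_le_iff]
    constructor
    · linarith [hkey2 x x']
    · have := hkey2 x' x
      rw [dist_comm x' x] at this
      linarith
  have hgge : ∀ x ∈ X, f x - ε/4 ≤ g x := by
    intro x hx
    refine le_ciInf fun y => ?_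
    by_cases hxy : dist x y < δ1
    · have hxK : x ∈ K := Metric.self_subset_cthickening X hx
      have hyK : y ∈ K := by
        refine Metric.mem_cthickening_of_dist_le y x (2*C0+1) X hx ?_
        rw [dist_comm]
        linarith [hxy.le]
      have h3 := hδ0 x hxK y hyK (lt_of_lt_of_le hxy (min_le_left _ _))
      rw [Real.dist_eq] at h3
      have h4 := (abs_lt.mp h3).2
      have h5 : (0:ℝ) ≤ L * dist x y := mul_nonneg hLpos.le dist_nonneg
      linarith
    · push_neg at hxy
      have h1 : L * δ1 ≤ L * dist x y := mul_le_mul_of_nonneg_left hxy hLpos.le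
      have h2 : L * δ1 = 2*C0+1 := by rw [hLdef]; field_simp
      have h3 := (abs_le.mp (hC0 y)).1
      have h4 := (abs_le.mp (hC0 x)).2
      linarith
  have hgcont : Continuous g := hglip.continuous
  have hgb : ∀ x ∈ X, |g x| ≤ C0 + ε := by
    intro x hx
    rw [abs_le]
    constructor
    · have h1 := hgge x hx
      have h2 := (abs_le.mp (hC0 x)).1
      linarith
    · have h1 := hgle x
      have h2 := (abs_le.mp (hC0 x)).2
      linarith
  have hintgμ : ∀ n, Integrable g (μ n) := fun n => aux_integrable (μ n) hXm (hμX n) hgcont hgb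
  have hintgν : Integrable g ν := aux_integrable ν hXm hνX hgcont hgb
  have hintfμ : ∀ n, Integrable f (μ n) := fun n =>
    aux_integrable (μ n) hXm (hμX n) hfc (fun x _ => hC0 x)
  have hintfν : Integrable f ν := aux_integrable ν hXm hνX hfc (fun x _ => hC0 x)
  have hfg : ∀ x ∈ X, |f x - g x| ≤ ε/4 := by
    intro x hx
    rw [abs_le]
    exact ⟨by linarith [hgle x], by linarith [hgge x hx]⟩
  have hdiffμ : ∀ n, |∫ x, f x ∂(μ n) - ∫ x, g x ∂(μ n)| ≤ ε/4 := by
    intro n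
    rw [← integral_sub (hintfμ n) (hintgμ n)]
    exact aux_int_bound (μ n) hXm (hμX n) (aeμ n) hfg
  have hdiffν : |∫ x, f x ∂ν - ∫ x, g x ∂ν| ≤ ε/4 := by
    rw [← integral_sub hintfν hintgν]
    exact aux_int_bound ν hXm hνX aeν hfg
  have hmid : ∀ n, |∫ x, g x ∂(μ n) - ∫ x, g x ∂ν| ≤ L * D n := by
    intro n
    set h : EuclideanSpace ℝ (Fin k) → ℝ := fun x => L⁻¹ * g x with hhdef
    have hh : LipschitzWith 1 h := by
      refine LipschitzWith.of_dist_le_mul fun x y => ?_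
      have h1 := hglip.dist_le_mul x y
      rw [Real.coe_toNNReal _ hLpos.le] at h1
      simp only [hhdef, Real.dist_eq] at h1 ⊢
      rw [← mul_sub, abs_mul, abs_of_pos (inv_pos.mpr hLpos), NNReal.coe_one, one_mul]
      calc L⁻¹ * |g x - g y| ≤ L⁻¹ * (L * dist x y) :=
            mul_le_mul_of_nonneg_left h1 (inv_pos.mpr hLpos).le
        _ = dist x y := by field_simp
    have hle : |∫ x, h x ∂(μ n) - ∫ x, h x ∂ν| ≤ D n :=
      le_csSup (hDbddAbove n) ⟨h, hh, rfl⟩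
    have e1 : ∫ x, h x ∂(μ n) = L⁻¹ * ∫ x, g x ∂(μ n) := integral_const_mul _ _
    have e2 : ∫ x, h x ∂ν = L⁻¹ * ∫ x, g x ∂ν := integral_const_mul _ _
    rw [e1, e2, ← mul_sub, abs_mul, abs_of_pos (inv_pos.mpr hLpos)] at hle
    calc |∫ x, g x ∂(μ n) - ∫ x, g x ∂ν|
        = L * (L⁻¹ * |∫ x, g x ∂(μ n) - ∫ x, g x ∂ν|) := by field_simp
      _ ≤ L * D n := mul_le_mul_of_nonneg_left hle hLpos.le
  obtain ⟨N, hN⟩ := (Metric.tendsto_atTop.mp part1) (ε/(4*(L+1))) (by positivity)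
  refine ⟨N, fun n hn => ?_⟩
  have hDn := hN n hn
  rw [Real.dist_eq, sub_zero, abs_of_nonneg (hD0 n)] at hDn
  have hmid' : L * D n < ε/4 := by
    have h1 : L * D n ≤ (L+1) * D n := by nlinarith [hD0 n]
    have h2 : (L+1) * D n < (L+1) * (ε/(4*(L+1))) :=
      mul_lt_mul_of_pos_left hDn (by linarith)
    have h3 : (L+1) * (ε/(4*(L+1))) = ε/4 := by
      field_simp
    linarith
  rw [Real.dist_eq]
  have t1 := hdiffμ n
  have t2 := hmid n
  have t3 := hdiffν
  calc |∫ x, f x ∂(μ n) - ∫ x, f x ∂ν|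
      ≤ |∫ x, f x ∂(μ n) - ∫ x, g x ∂(μ n)| + |∫ x, g x ∂(μ n) - ∫ x, f x ∂ν| :=
        abs_sub_le _ _ _
    _ ≤ |∫ x, f x ∂(μ n) - ∫ x, g x ∂(μ n)|
        + (|∫ x, g x ∂(μ n) - ∫ x, g x ∂ν| + |∫ x, g x ∂ν - ∫ x, f x ∂ν|) :=
        add_le_add_right (abs_sub_le _ _ _) _
    _ ≤ ε/4 + (L * D n + ε/4) := by
        rw [abs_sub_comm (∫ x, g x ∂ν)]
        exact add_le_add t1 (add_le_add t2 t3)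
    _ < ε := by linarith
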